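/- Let 0 < q < 1, a ∈ ℝ, and u, v > 0 with |a u| < v. Then N_q(e_q(a x))(u;v) = 1/(v - a u), where e_q(t) = ∑_{n≥0} t^n/(q;q)_n and N_q is the series-defined q-Natural transform of the first type. -/

import Mathlib

set_option maxHeartbeats 1000000


/-- The q-Pochhammer symbol `(a;q)_n`. -/
noncomputable def qPoch (q a : ℝ) (n : ℕ) : ℝ := ∏ k ∈ Finset.range n, (1 - a * q ^ k)

/-- `(a;q)_∞`. -/
noncomputable def qPochInf (q a : ℝ) : ℝ := ∏' k : ℕ, (1 - a * q ^ k)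

/-- The q-exponential `e_q(t) = ∑_{n≥0} t^n/(q;q)_n`. -/
noncomputable def qExp (q t : ℝ) : ℝ := ∑' n : ℕ, t ^ n / qPoch q q n

/-- The first-type q-Natural transform. -/
noncomputable def qNatural (q : ℝ) (f : ℝ → ℝ) (u v : ℝ) : ℝ :=
  qPochInf q q / v * ∑' k : ℕ, q ^ k * f (u / v * q ^ k) / qPoch q q k

open Real Filter Finset

section aux

variable {q : ℝ}

lemma qfac_pos (hq0 : 0 < q) (hq1 : q < 1) {z : ℝ} (hz0 : 0 ≤ z) (hz1 : z < 1) (k : ℕ) :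
    0 < 1 - z * q ^ k := by
  have h1 : q ^ k ≤ 1 := pow_le_one₀ hq0.le hq1.le
  have h2 : 0 < q ^ k := pow_pos hq0 k
  nlinarith

lemma qfac_le_one (hq0 : 0 < q) {z : ℝ} (hz0 : 0 ≤ z) (k : ℕ) :
    1 - z * q ^ k ≤ 1 := by
  have h2 : 0 < q ^ k := pow_pos hq0 k
  nlinarith

lemma summable_log_qfac (hq0 : 0 < q) (hq1 : q < 1) {z : ℝ} (hz0 : 0 ≤ z) (hz1 : z < 1) :
    Summable fun k : ℕ => Real.log (1 - z * q ^ k) := by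
  rw [← summable_neg_iff]
  have hb : Summable fun k : ℕ => (z / (1 - z)) * q ^ k :=
    (summable_geometric_of_lt_one hq0.le hq1).mul_left _
  refine Summable.of_nonneg_of_le (fun k => ?_) (fun k => ?_) hb
  · simp only [neg_nonneg]
    exact Real.log_nonpos (qfac_pos hq0 hq1 hz0 hz1 k).le (qfac_le_one hq0 hz0 k)
  · have hpos := qfac_pos hq0 hq1 hz0 hz1 k
    have hkle : q ^ k ≤ 1 := pow_le_one₀ hq0.le hq1.le
    have hz' : 0 < 1 - z := by linarith
    have h1 : 1 - z ≤ 1 - z * q ^ k := by nlinarith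
    have hlog : Real.log ((1 - z * q ^ k)⁻¹) ≤ (1 - z * q ^ k)⁻¹ - 1 :=
      Real.log_le_sub_one_of_pos (by positivity)
    rw [Real.log_inv] at hlog
    have h2 : (1 - z * q ^ k)⁻¹ - 1 = z * q ^ k / (1 - z * q ^ k) := by
      field_simp
      ring
    rw [h2] at hlog
    refine hlog.trans ?_
    rw [show z / (1 - z) * q ^ k = z * q ^ k / (1 - z) by ring,
      div_le_div_iff₀ hpos hz']
    have hk0 : 0 ≤ z * q ^ k := by positivity
    nlinarith [pow_nonneg hq0.le k]

lemma hasProd_qfac (hq0 : 0 < q) (hq1 : q < 1) {z : ℝ} (hz0 : 0 ≤ z) (hz1 : z < 1) :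
    HasProd (fun k : ℕ => 1 - z * q ^ k)
      (Real.exp (∑' k : ℕ, Real.log (1 - z * q ^ k))) := by
  have h := (summable_log_qfac hq0 hq1 hz0 hz1).hasSum.rexp
  have he : (rexp ∘ fun k : ℕ => Real.log (1 - z * q ^ k)) = fun k : ℕ => 1 - z * q ^ k := by
    funext k
    exact Real.exp_log (qfac_pos hq0 hq1 hz0 hz1 k)
  rwa [he] at h

lemma tprod_qfac_eq (hq0 : 0 < q) (hq1 : q < 1) {z : ℝ} (hz0 : 0 ≤ z) (hz1 : z < 1) :
    (∏' k : ℕ, (1 - z * q ^ k)) = Real.exp (∑' k : ℕ, Real.log (1 - z * q ^ k)) :=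
  (hasProd_qfac hq0 hq1 hz0 hz1).tprod_eq

lemma tprod_qfac_pos (hq0 : 0 < q) (hq1 : q < 1) {z : ℝ} (hz0 : 0 ≤ z) (hz1 : z < 1) :
    0 < ∏' k : ℕ, (1 - z * q ^ k) := by
  rw [tprod_qfac_eq hq0 hq1 hz0 hz1]; exact Real.exp_pos _

lemma tprod_qfac_le_one (hq0 : 0 < q) (hq1 : q < 1) {z : ℝ} (hz0 : 0 ≤ z) (hz1 : z < 1) :
    (∏' k : ℕ, (1 - z * q ^ k)) ≤ 1 := by
  rw [tprod_qfac_eq hq0 hq1 hz0 hz1, Real.exp_le_one_iff]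
  refine tsum_nonpos fun k => ?_
  exact Real.log_nonpos (qfac_pos hq0 hq1 hz0 hz1 k).le (qfac_le_one hq0 hz0 k)

lemma qPoch_pos (hq0 : 0 < q) (hq1 : q < 1) (n : ℕ) : 0 < qPoch q q n := by
  refine Finset.prod_pos fun k _ => qfac_pos hq0 hq1 hq0.le hq1 k

/-- Splitting of the infinite product `(q;q)_∞ = (q;q)_n · (q^{n+1};q)_∞`. -/
lemma qPochInf_split (hq0 : 0 < q) (hq1 : q < 1) (n : ℕ) :
    qPochInf q q = qPoch q q n * ∏' j : ℕ, (1 - q ^ (n + 1) * q ^ j) := by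
  have hq0' : (0:ℝ) ≤ q := hq0.le
  have hs := summable_log_qfac hq0 hq1 hq0' hq1
  have hzn0 : (0:ℝ) ≤ q ^ (n+1) := by positivity
  have hzn1 : q ^ (n+1) < 1 := pow_lt_one₀ hq0' hq1 (Nat.succ_ne_zero n)
  have key : ∀ j : ℕ, 1 - q * q ^ (j + n) = 1 - q ^ (n+1) * q ^ j := by
    intro j
    congr 1
    rw [← pow_succ', ← pow_add]
    congr 1
    omega
  have hsplit := Summable.sum_add_tsum_nat_add (f := fun k : ℕ => Real.log (1 - q * q ^ k)) n hs
  rw [qPochInf, tprod_qfac_eq hq0 hq1 hq0' hq1, ← hsplit, Real.exp_add]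
  congr 1
  · rw [Real.exp_sum]
    refine Finset.prod_congr rfl fun k _ => Real.exp_log (qfac_pos hq0 hq1 hq0' hq1 k)
  · rw [tprod_qfac_eq hq0 hq1 hzn0 hzn1]
    congr 1
    exact tsum_congr fun j => by
      show Real.log (1 - q * q ^ (j + n)) = Real.log (1 - q ^ (n + 1) * q ^ j)
      rw [key j]

lemma qPochInf_pos (hq0 : 0 < q) (hq1 : q < 1) : 0 < qPochInf q q :=
  tprod_qfac_pos hq0 hq1 hq0.le hq1

lemma qPochInf_le_qPoch (hq0 : 0 < q) (hq1 : q < 1) (n : ℕ) :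
    qPochInf q q ≤ qPoch q q n := by
  have hzn0 : (0:ℝ) ≤ q ^ (n+1) := by positivity
  have hzn1 : q ^ (n+1) < 1 := pow_lt_one₀ hq0.le hq1 (Nat.succ_ne_zero n)
  rw [qPochInf_split hq0 hq1 n]
  calc qPoch q q n * ∏' j : ℕ, (1 - q ^ (n + 1) * q ^ j)
      ≤ qPoch q q n * 1 := by
        refine mul_le_mul_of_nonneg_left (tprod_qfac_le_one hq0 hq1 hzn0 hzn1)
          (qPoch_pos hq0 hq1 n).le
    _ = qPoch q q n := mul_one _

lemma summable_qExp_series (hq0 : 0 < q) (hq1 : q < 1) {z : ℝ} (hz : |z| < 1) :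
    Summable fun n : ℕ => z ^ n / qPoch q q n := by
  obtain ⟨c, hc⟩ : ∃ c : ℝ, c = qPochInf q q := ⟨_, rfl⟩
  have hcpos : 0 < c := hc ▸ qPochInf_pos hq0 hq1
  have hcle : ∀ n : ℕ, c ≤ qPoch q q n := fun n => hc ▸ qPochInf_le_qPoch hq0 hq1 n
  refine Summable.of_abs ?_
  have hb : Summable fun n : ℕ => c⁻¹ * |z| ^ n :=
    ((summable_geometric_of_lt_one (abs_nonneg z) hz).mul_left _)
  refine Summable.of_nonneg_of_le (fun n => abs_nonneg _) (fun n => ?_) hb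
  rw [abs_div, abs_pow, abs_of_pos (qPoch_pos hq0 hq1 n)]
  rw [div_le_iff₀ (qPoch_pos hq0 hq1 n)]
  calc |z| ^ n = c⁻¹ * |z| ^ n * c := by field_simp
    _ ≤ c⁻¹ * |z| ^ n * qPoch q q n := by
        refine mul_le_mul_of_nonneg_left (hcle n) (by positivity)

lemma qPoch_succ (q : ℝ) (n : ℕ) :
    qPoch q q (n + 1) = qPoch q q n * (1 - q ^ (n + 1)) := by
  rw [qPoch, Finset.prod_range_succ, ← pow_succ']
  rfl

/-- The functional equation `(1-z) E(z) = E(qz)`. -/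
lemma qExp_funceq (hq0 : 0 < q) (hq1 : q < 1) {z : ℝ} (hz : |z| < 1) :
    (1 - z) * qExp q z = qExp q (q * z) := by
  have hqz' : |q * z| < 1 := lt_of_le_of_lt (by
    rw [abs_mul, abs_of_pos hq0]
    nlinarith [abs_nonneg z]) hz
  have h1 : Summable fun n : ℕ => z ^ n / qPoch q q n := summable_qExp_series hq0 hq1 hz
  have h2 : Summable fun n : ℕ => (q * z) ^ n / qPoch q q n := summable_qExp_series hq0 hq1 hqz'
  have hsub : qExp q z - qExp q (q * z)
      = ∑' n : ℕ, (z ^ n / qPoch q q n - (q * z) ^ n / qPoch q q n) := by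
    rw [qExp, qExp, ← Summable.tsum_sub h1 h2]
  have hdiff : Summable (fun n : ℕ => z ^ n / qPoch q q n - (q * z) ^ n / qPoch q q n) :=
    h1.sub h2
  have hshift := Summable.tsum_eq_zero_add hdiff
  have h00 : z ^ 0 / qPoch q q 0 - (q * z) ^ 0 / qPoch q q 0 = 0 := by simp [qPoch]
  rw [h00, zero_add] at hshift
  have hterm : ∀ m : ℕ,
      z ^ (m + 1) / qPoch q q (m + 1) - (q * z) ^ (m + 1) / qPoch q q (m + 1)
        = z * (z ^ m / qPoch q q m) := by
    intro m
    have hp := qPoch_pos hq0 hq1 m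
    have hf : (0:ℝ) < 1 - q ^ (m + 1) :=
      sub_pos.mpr (pow_lt_one₀ hq0.le hq1 (Nat.succ_ne_zero m))
    rw [qPoch_succ, mul_pow]
    field_simp
    ring
  have htail : ∑' m : ℕ, (z ^ (m+1) / qPoch q q (m+1) - (q * z) ^ (m+1) / qPoch q q (m+1))
      = z * qExp q z := by
    rw [qExp, ← tsum_mul_left]
    exact tsum_congr hterm
  have : qExp q z - qExp q (q * z) = z * qExp q z := by
    rw [hsub, hshift, htail]
  linarith

lemma qExp_prod_eq (hq0 : 0 < q) (hq1 : q < 1) {z : ℝ} (hz : |z| < 1) (N : ℕ) :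
    qExp q z * ∏ j ∈ Finset.range N, (1 - z * q ^ j) = qExp q (z * q ^ N) := by
  induction N with
  | zero => simp
  | succ N ih =>
    have hzN : |z * q ^ N| < 1 := by
      rw [abs_mul, abs_pow, abs_of_pos hq0]
      calc |z| * q ^ N ≤ |z| * 1 := by
            refine mul_le_mul_of_nonneg_left (pow_le_one₀ hq0.le hq1.le) (abs_nonneg z)
        _ = |z| := mul_one _
        _ < 1 := hz
    rw [Finset.prod_range_succ, ← mul_assoc, ih]
    have := qExp_funceq hq0 hq1 hzN
    calc qExp q (z * q ^ N) * (1 - z * q ^ N)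
        = (1 - z * q ^ N) * qExp q (z * q ^ N) := by ring
      _ = qExp q (q * (z * q ^ N)) := this
      _ = qExp q (z * q ^ (N + 1)) := by congr 1; ring

lemma qExp_zero_arg_tendsto (hq0 : 0 < q) (hq1 : q < 1) {z : ℝ} (hz0 : 0 ≤ z) (hz1 : z < 1) :
    Tendsto (fun N : ℕ => qExp q (z * q ^ N)) atTop (nhds 1) := by
  obtain ⟨c, hc⟩ : ∃ c : ℝ, c = qPochInf q q := ⟨_, rfl⟩
  have hcpos : 0 < c := hc ▸ qPochInf_pos hq0 hq1
  have hwlt : ∀ N : ℕ, z * q ^ N < 1 := by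
    intro N
    have : q ^ N ≤ 1 := pow_le_one₀ hq0.le hq1.le
    nlinarith
  have hw0 : ∀ N : ℕ, 0 ≤ z * q ^ N := fun N => by positivity
  have habs : ∀ N : ℕ, |z * q ^ N| < 1 := fun N => by
    rw [abs_of_nonneg (hw0 N)]; exact hwlt N
  -- lower bound : 1 ≤ qExp q w
  have hlow : ∀ N : ℕ, 1 ≤ qExp q (z * q ^ N) := by
    intro N
    set w := z * q ^ N
    have hs := summable_qExp_series hq0 hq1 (habs N)
    have h00 : w ^ 0 / qPoch q q 0 = 1 := by simp [qPoch]
    rw [qExp, Summable.tsum_eq_zero_add hs, h00, le_add_iff_nonneg_right]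
    refine tsum_nonneg fun m => ?_
    have := qPoch_pos hq0 hq1 (m + 1)
    have : 0 ≤ w ^ (m+1) := pow_nonneg (hw0 N) _
    positivity
  -- upper bound
  have hup : ∀ N : ℕ, qExp q (z * q ^ N) ≤ 1 + z / (c * (1 - z)) * q ^ N := by
    intro N
    set w := z * q ^ N with hwdef
    have hs := summable_qExp_series hq0 hq1 (habs N)
    have h00 : w ^ 0 / qPoch q q 0 = 1 := by simp [qPoch]
    rw [qExp, Summable.tsum_eq_zero_add hs, h00]
    have hq' : 0 ≤ (1:ℝ) - z := by linarith
    have hzq : 0 ≤ w := hw0 N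
    have hwz : w ≤ z := by
      have : q ^ N ≤ 1 := pow_le_one₀ hq0.le hq1.le
      nlinarith
    have htb : ∀ m : ℕ, w ^ (m+1) / qPoch q q (m+1) ≤ (w / c) * z ^ m := by
      intro m
      have hp := qPoch_pos hq0 hq1 (m+1)
      have hle : c ≤ qPoch q q (m+1) := hc ▸ qPochInf_le_qPoch hq0 hq1 (m+1)
      have h1 : w ^ (m+1) / qPoch q q (m+1) ≤ w ^ (m+1) / c := by
        refine div_le_div_of_nonneg_left (by positivity) hcpos hle
      refine h1.trans ?_
      rw [div_le_iff₀ hcpos, pow_succ']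
      have hwm : w ^ m ≤ z ^ m := pow_le_pow_left₀ hzq hwz m
      calc w * w ^ m ≤ w * z ^ m := by
            refine mul_le_mul_of_nonneg_left hwm hzq
        _ = w / c * z ^ m * c := by field_simp
    have hsum2 : Summable fun m : ℕ => (w / c) * z ^ m :=
      (summable_geometric_of_lt_one hz0 hz1).mul_left _
    have hsum1 : Summable fun m : ℕ => w ^ (m+1) / qPoch q q (m+1) :=
      (summable_nat_add_iff 1).mpr hs
    have := Summable.tsum_le_tsum htb hsum1 hsum2
    rw [tsum_mul_left, tsum_geometric_of_lt_one hz0 hz1] at this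
    have heq : w / c * (1 - z)⁻¹ = z / (c * (1 - z)) * q ^ N := by
      rw [hwdef]; field_simp
    rw [heq] at this
    linarith
  have hupt : Tendsto (fun N : ℕ => 1 + z / (c * (1 - z)) * q ^ N) atTop (nhds 1) := by
    have h1 : Tendsto (fun N : ℕ => q ^ N) atTop (nhds 0) :=
      tendsto_pow_atTop_nhds_zero_of_lt_one hq0.le hq1
    have h2 := h1.const_mul (z / (c * (1 - z)))
    rw [mul_zero] at h2
    have := h2.const_add 1
    simpa using this
  exact tendsto_of_tendsto_of_tendsto_of_le_of_le tendsto_const_nhds hupt hlow hup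

/-- Euler's identity specialized: `E(z) ∏(1-zq^j) = 1` for `0 ≤ z < 1`. -/
lemma qExp_mul_tprod (hq0 : 0 < q) (hq1 : q < 1) {z : ℝ} (hz0 : 0 ≤ z) (hz1 : z < 1) :
    qExp q z * ∏' j : ℕ, (1 - z * q ^ j) = 1 := by
  have hprod := hasProd_qfac hq0 hq1 hz0 hz1
  have hP : Tendsto (fun N : ℕ => ∏ j ∈ Finset.range N, (1 - z * q ^ j)) atTop
      (nhds (∏' j : ℕ, (1 - z * q ^ j))) := by
    rw [tprod_qfac_eq hq0 hq1 hz0 hz1]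
    exact hprod.tendsto_prod_nat
  have h1 : Tendsto (fun N : ℕ => qExp q z * ∏ j ∈ Finset.range N, (1 - z * q ^ j)) atTop
      (nhds (qExp q z * ∏' j : ℕ, (1 - z * q ^ j))) := hP.const_mul _
  have habs : |z| < 1 := by rwa [abs_of_nonneg hz0]
  have h2 : Tendsto (fun N : ℕ => qExp q z * ∏ j ∈ Finset.range N, (1 - z * q ^ j)) atTop
      (nhds 1) := by
    have := qExp_zero_arg_tendsto hq0 hq1 hz0 hz1
    refine this.congr fun N => (qExp_prod_eq hq0 hq1 habs N).symm
  exact tendsto_nhds_unique h1 h2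

/-- The key evaluation: `∑_k (q^{n+1})^k/(q;q)_k = (q;q)_n / (q;q)_∞`. -/
lemma euler_eval (hq0 : 0 < q) (hq1 : q < 1) (n : ℕ) :
    (∑' k : ℕ, (q ^ (n+1)) ^ k / qPoch q q k) = qPoch q q n / qPochInf q q := by
  have hzn0 : (0:ℝ) ≤ q ^ (n+1) := by positivity
  have hzn1 : q ^ (n+1) < 1 := pow_lt_one₀ hq0.le hq1 (Nat.succ_ne_zero n)
  have heuler := qExp_mul_tprod hq0 hq1 hzn0 hzn1
  have hQpos := tprod_qfac_pos hq0 hq1 hzn0 hzn1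
  have hsplit := qPochInf_split hq0 hq1 n
  have hppos := qPoch_pos hq0 hq1 n
  have hcpos := qPochInf_pos hq0 hq1
  rw [qExp] at heuler
  have hQne : (∏' j : ℕ, (1 - q ^ (n+1) * q ^ j)) ≠ 0 := hQpos.ne'
  have hE : (∑' k : ℕ, (q ^ (n+1)) ^ k / qPoch q q k)
      = (∏' j : ℕ, (1 - q ^ (n+1) * q ^ j))⁻¹ := by
    field_simp
    linarith [heuler]
  rw [hE]
  have hQ : (∏' j : ℕ, (1 - q ^ (n+1) * q ^ j)) = qPochInf q q / qPoch q q n := by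
    rw [hsplit]; field_simp
  rw [hQ, inv_div]

end aux

/-- For `0 < q < 1`, `u, v > 0` and `|a u| < v`,
`N_q(e_q(a x))(u;v) = 1/(v - a u)`. -/
theorem qNatural_qExp (q a u v : ℝ) (hq0 : 0 < q) (hq1 : q < 1)
    (hu : 0 < u) (hv : 0 < v) (h : |a * u| < v) :
    qNatural q (fun x => qExp q (a * x)) u v = 1 / (v - a * u) := by
  have hvne : v ≠ 0 := ne_of_gt hv
  obtain ⟨t, ht⟩ : ∃ t : ℝ, t = a * u / v := ⟨_, rfl⟩
  have habs : |t| < 1 := by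
    rw [ht, abs_div, abs_of_pos hv, div_lt_one hv]
    exact h
  obtain ⟨c, hc⟩ : ∃ c : ℝ, c = qPochInf q q := ⟨_, rfl⟩
  have hcpos : 0 < c := hc ▸ qPochInf_pos hq0 hq1
  have hcle : ∀ n : ℕ, c ≤ qPoch q q n := fun n => hc ▸ qPochInf_le_qPoch hq0 hq1 n
  obtain ⟨F, hF⟩ : ∃ F : ℕ × ℕ → ℝ, F = fun p : ℕ × ℕ =>
      (q ^ p.1 / qPoch q q p.1) * ((t * q ^ p.1) ^ p.2 / qPoch q q p.2) := ⟨_, rfl⟩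
  have hFval : ∀ k n : ℕ, F (k, n)
      = (q ^ k / qPoch q q k) * ((t * q ^ k) ^ n / qPoch q q n) := by
    intro k n; rw [hF]
  have habs_tq : ∀ k : ℕ, |t * q ^ k| < 1 := by
    intro k
    rw [abs_mul, abs_pow, abs_of_pos hq0]
    calc |t| * q ^ k ≤ |t| * 1 := by
          refine mul_le_mul_of_nonneg_left (pow_le_one₀ hq0.le hq1.le) (abs_nonneg t)
      _ = |t| := mul_one _
      _ < 1 := habs
  -- summability of the double series
  have hFsum : Summable F := by
    refine Summable.of_abs ?_
    have hb : Summable fun p : ℕ × ℕ => (c⁻¹ * q ^ p.1) * (c⁻¹ * |t| ^ p.2) := by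
      refine Summable.mul_of_nonneg (f := fun k : ℕ => c⁻¹ * q ^ k)
        (g := fun n : ℕ => c⁻¹ * |t| ^ n) ?_ ?_ ?_ ?_
      · exact (summable_geometric_of_lt_one hq0.le hq1).mul_left _
      · exact (summable_geometric_of_lt_one (abs_nonneg t) habs).mul_left _
      · intro k; positivity
      · intro n; positivity
    refine Summable.of_nonneg_of_le (fun p => abs_nonneg _) (fun p => ?_) hb
    obtain ⟨k, n⟩ := p
    have hpk := qPoch_pos hq0 hq1 k
    have hpn := qPoch_pos hq0 hq1 n
    have h1 : q ^ k / qPoch q q k ≤ c⁻¹ * q ^ k := by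
      rw [div_le_iff₀ hpk]
      calc q ^ k = c⁻¹ * q ^ k * c := by field_simp
        _ ≤ c⁻¹ * q ^ k * qPoch q q k := by
            refine mul_le_mul_of_nonneg_left (hcle k) (by positivity)
    have h2' : |t * q ^ k| ^ n / qPoch q q n ≤ c⁻¹ * |t| ^ n := by
      rw [div_le_iff₀ hpn]
      have hle1 : |t * q ^ k| ^ n ≤ |t| ^ n := by
        refine pow_le_pow_left₀ (abs_nonneg _) ?_ n
        rw [abs_mul, abs_pow, abs_of_pos hq0]
        calc |t| * q ^ k ≤ |t| * 1 := by
              refine mul_le_mul_of_nonneg_left (pow_le_one₀ hq0.le hq1.le) (abs_nonneg t)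
          _ = |t| := mul_one _
      calc |t * q ^ k| ^ n ≤ |t| ^ n := hle1
        _ = c⁻¹ * |t| ^ n * c := by field_simp
        _ ≤ c⁻¹ * |t| ^ n * qPoch q q n := by
            refine mul_le_mul_of_nonneg_left (hcle n) (by positivity)
    have habseq : |F (k, n)| = (q ^ k / qPoch q q k) * (|t * q ^ k| ^ n / qPoch q q n) := by
      rw [hFval k n, abs_mul, abs_div, abs_div, abs_pow, abs_pow, abs_of_pos hq0,
        abs_of_pos hpk, abs_of_pos hpn]
    rw [habseq]
    refine mul_le_mul h1 h2' (by positivity) (by positivity)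
  -- summability of inner sums
  have hinner1 : ∀ k : ℕ, Summable fun n : ℕ => F (k, n) := by
    intro k
    have := (summable_qExp_series hq0 hq1 (habs_tq k)).mul_left (q ^ k / qPoch q q k)
    refine this.congr fun n => (hFval k n).symm
  have hinner2 : ∀ n : ℕ, Summable fun k : ℕ => F (k, n) :=
    fun n => hFsum.prod_symm.prod_factor n
  -- the outer series equals the iterated sum over k of the double sum
  have hexp : (∑' k : ℕ, q ^ k * qExp q (a * (u / v * q ^ k)) / qPoch q q k)
      = ∑' k : ℕ, ∑' n : ℕ, F (k, n) := by
    refine tsum_congr fun k => ?_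
    have harg : a * (u / v * q ^ k) = t * q ^ k := by
      rw [ht]; ring
    have : (∑' n : ℕ, F (k, n))
        = (q ^ k / qPoch q q k) * ∑' n : ℕ, (t * q ^ k) ^ n / qPoch q q n := by
      rw [← tsum_mul_left]
      exact tsum_congr fun n => hFval k n
    rw [this, harg, qExp]
    ring
  -- swap
  have hswap : (∑' k : ℕ, ∑' n : ℕ, F (k, n)) = ∑' n : ℕ, ∑' k : ℕ, F (k, n) :=
    (Summable.tsum_comm' (f := fun k n => F (k, n)) hFsum hinner1 hinner2).symm
  -- evaluate inner sum over k
  have hkey : ∀ n : ℕ, (∑' k : ℕ, F (k, n)) = t ^ n / c := by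
    intro n
    have hpn := qPoch_pos hq0 hq1 n
    have hterm : ∀ k : ℕ, F (k, n) = (t ^ n / qPoch q q n) * ((q ^ (n+1)) ^ k / qPoch q q k) := by
      intro k
      have hpk := qPoch_pos hq0 hq1 k
      have hpow : q ^ k * (t * q ^ k) ^ n = t ^ n * (q ^ (n+1)) ^ k := by
        rw [mul_pow, ← pow_mul, ← pow_mul]
        rw [show q ^ k * (t ^ n * q ^ (k * n)) = t ^ n * (q ^ k * q ^ (k * n)) by ring]
        rw [← pow_add]
        congr 2
        ring
      rw [hFval k n]
      field_simp
      linear_combination hpow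
    rw [tsum_congr hterm, tsum_mul_left, euler_eval hq0 hq1 n, ← hc]
    field_simp
  have h1t : (0:ℝ) < 1 - t := by
    have := (abs_lt.mp habs).2
    linarith
  have htv : v * (1 - t) = v - a * u := by
    rw [ht]; field_simp
  have hcne : c ≠ 0 := hcpos.ne'
  have h1tne : (1:ℝ) - t ≠ 0 := h1t.ne'
  have hunfold : qNatural q (fun x => qExp q (a * x)) u v
      = qPochInf q q / v * ∑' k : ℕ, q ^ k * qExp q (a * (u / v * q ^ k)) / qPoch q q k := rfl
  rw [hunfold, hexp, hswap, tsum_congr hkey, tsum_div_const,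
    tsum_geometric_of_abs_lt_one habs, ← hc,
    show (1:ℝ) / (v - a * u) = 1 / (v * (1 - t)) by rw [htv]]
  field_simp
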